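/- Let Φ : ℝ → ℝ be convex, assume s ↦ exp(−Φ(s)) is integrable on (z, ∞) for every z ∈ ℝ, and let c ∈ ℝ^n and τ ∈ ℝ. Then the function x ↦ −log( ∫_{(τ − ⟨c, x⟩, ∞)} exp(−Φ(s)) ds ) is convex on ℝ^n. -/

import Mathlib

open MeasureTheory

section aux
variable (Φ : ℝ → ℝ)

/-- Key convexity increment inequality. -/
lemma phi_incr (hΦ : ConvexOn ℝ Set.univ Φ) {s u d : ℝ} (hsu : s ≤ u) (hd : 0 ≤ d) :
    Φ (s + d) + Φ u ≤ Φ s + Φ (u + d) := by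
  rcases eq_or_lt_of_le (by linarith : (0:ℝ) ≤ u + d - s) with hD | hD
  · have h1 : u = s := by linarith
    have h2 : d = 0 := by linarith
    simp [h1, h2]
  · have ha : (0:ℝ) ≤ (u - s) / (u + d - s) := div_nonneg (by linarith) hD.le
    have hb : (0:ℝ) ≤ d / (u + d - s) := div_nonneg hd hD.le
    have hab : (u - s) / (u + d - s) + d / (u + d - s) = 1 := by
      field_simp
      ring
    have h1 := hΦ.2 (Set.mem_univ s) (Set.mem_univ (u + d)) ha hb hab
    have h2 := hΦ.2 (Set.mem_univ s) (Set.mem_univ (u + d)) hb ha (by linarith)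
    rw [smul_eq_mul, smul_eq_mul] at h1 h2
    have e1 : (u - s) / (u + d - s) * s + d / (u + d - s) * (u + d) = s + d := by
      field_simp; ring
    have e2 : d / (u + d - s) * s + (u - s) / (u + d - s) * (u + d) = u := by
      field_simp; ring
    rw [e1] at h1
    rw [e2] at h2
    have hq : d / (u + d - s) = 1 - (u - s) / (u + d - s) := by linarith
    rw [hq] at h1 h2
    simp only [smul_eq_mul] at h1 h2
    linarith

end aux

theorem neg_log_survival_convex (Φ : ℝ → ℝ) (hΦ : ConvexOn ℝ Set.univ Φ)
    (hint : ∀ z : ℝ, IntegrableOn (fun s => Real.exp (-Φ s)) (Set.Ioi z)) :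
    ConvexOn ℝ Set.univ (fun t : ℝ =>
      -Real.log (∫ s in Set.Ioi t, Real.exp (-Φ s))) := by
  set g : ℝ → ℝ := fun s => Real.exp (-Φ s) with hg
  set G : ℝ → ℝ := fun t => ∫ s in Set.Ioi t, g s with hGdef
  have hΦc : Continuous Φ := by
    rw [← continuousOn_univ]
    exact hΦ.continuousOn isOpen_univ
  have hgc : Continuous g := Real.continuous_exp.comp hΦc.neg
  have hGpos : ∀ t, 0 < G t := by
    intro t
    have h0 : 0 ≤ᵐ[volume.restrict (Set.Ioi t)] g :=
      Filter.Eventually.of_forall fun s => (Real.exp_pos _).le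
    rw [hGdef]
    rw [setIntegral_pos_iff_support_of_nonneg_ae h0 (hint t)]
    have : Function.support g = Set.univ := by
      ext s; simp [hg, Real.exp_ne_zero]
    rw [this, Set.univ_inter]
    simp
  -- G b = G a - ∫ a..b g
  have hGsub : ∀ a b : ℝ, a ≤ b → G a = (∫ u in a..b, g u) + G b := by
    intro a b hab
    rw [intervalIntegral.integral_of_le hab, hGdef]
    rw [← setIntegral_union (Set.Ioc_disjoint_Ioi le_rfl) measurableSet_Ioi
      ((hint a).mono_set Set.Ioc_subset_Ioi_self) (hint b)]
    rw [Set.Ioc_union_Ioi_eq_Ioi hab]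
  have hGeq : ∀ a b : ℝ, G b = G a - ∫ u in a..b, g u := by
    intro a b
    rcases le_total a b with h | h
    · rw [hGsub a b h]; ring
    · rw [hGsub b a h, intervalIntegral.integral_symm]; ring
  have hGderiv : ∀ t : ℝ, HasDerivAt G (-(g t)) t := by
    intro t
    have h1 : HasDerivAt (fun u => ∫ x in (t-1)..u, g x) (g t) t := by
      exact intervalIntegral.integral_hasDerivAt_right
        (hgc.intervalIntegrable _ _)
        (hgc.stronglyMeasurable.stronglyMeasurableAtFilter)
        hgc.continuousAt
    have h2 : G = fun u => G (t-1) - ∫ x in (t-1)..u, g x := funext fun u => hGeq (t-1) u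
    rw [h2]
    simpa using (h1.const_sub (G (t-1)))
  set F : ℝ → ℝ := fun t => -Real.log (G t) with hF
  have hFderiv : ∀ t : ℝ, HasDerivAt F (g t / G t) t := by
    intro t
    have := ((hGderiv t).log (hGpos t).ne').neg
    simp only [neg_div, neg_neg] at this
    exact this
  -- shift representation of G
  have hshift : ∀ s d : ℝ, G (s + d) = ∫ u in Set.Ioi s, g (u + d) := by
    intro s d
    have hmp : MeasurePreserving (· + d) volume volume := measurePreserving_add_right volume d
    have hemb : MeasurableEmbedding (· + d : ℝ → ℝ) :=
      (MeasurableEquiv.addRight d).measurableEmbedding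
    have heq := hmp.setIntegral_preimage_emb hemb g (Set.Ioi (s + d))
    have hpre : (· + d) ⁻¹' Set.Ioi (s + d) = Set.Ioi s := by
      ext u; simp
    calc G (s + d) = ∫ y in Set.Ioi (s + d), g y := rfl
      _ = ∫ x in (· + d) ⁻¹' Set.Ioi (s + d), g (x + d) := heq.symm
      _ = ∫ u in Set.Ioi s, g (u + d) := by rw [hpre]
  have hshiftInt : ∀ s d : ℝ, IntegrableOn (fun u => g (u + d)) (Set.Ioi s) := by
    intro s d
    have hmp : MeasurePreserving (· + d) volume volume := measurePreserving_add_right volume d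
    have hemb : MeasurableEmbedding (· + d : ℝ → ℝ) :=
      (MeasurableEquiv.addRight d).measurableEmbedding
    have := (hmp.integrableOn_comp_preimage hemb (f := g) (s := Set.Ioi (s + d))).mpr
      (hint (s + d))
    have hpre : (· + d) ⁻¹' Set.Ioi (s + d) = Set.Ioi s := by
      ext u; simp [lt_sub_iff_add_lt]
    rwa [hpre] at this
  -- key ratio monotonicity
  have hkey : ∀ s t : ℝ, s ≤ t → g s * G t ≤ g t * G s := by
    intro s t hst
    set d := t - s with hd
    have hd0 : 0 ≤ d := by simp [hd]; linarith
    have ht : t = s + d := by ring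
    rw [ht, hshift s d, hGdef]
    rw [← integral_const_mul, ← integral_const_mul]
    apply setIntegral_mono_on
    · exact (hshiftInt s d).const_mul _
    · exact (hint s).const_mul _
    · exact measurableSet_Ioi
    · intro u hu
      have hsu : s ≤ u := le_of_lt hu
      have := phi_incr Φ hΦ hsu hd0
      simp only [hg]
      rw [← Real.exp_add, ← Real.exp_add]
      exact Real.exp_le_exp.mpr (by linarith)
  have hFdiff : Differentiable ℝ F := fun t => (hFderiv t).differentiableAt
  have hderiv_eq : deriv F = fun t => g t / G t := funext fun t => (hFderiv t).deriv
  have hmono : Monotone (deriv F) := by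
    rw [hderiv_eq]
    intro s t hst
    rw [div_le_div_iff₀ (hGpos s) (hGpos t)]
    exact hkey s t hst
  exact hmono.convexOn_univ_of_deriv hFdiff

theorem stmt_10 (n : ℕ) (Φ : ℝ → ℝ) (hΦ : ConvexOn ℝ Set.univ Φ)
    (hint : ∀ z : ℝ, IntegrableOn (fun s => Real.exp (-Φ s)) (Set.Ioi z))
    (c : Fin n → ℝ) (τ : ℝ) :
    ConvexOn ℝ Set.univ (fun x : Fin n → ℝ =>
      -Real.log (∫ s in Set.Ioi (τ - ∑ k, c k * x k), Real.exp (-Φ s))) := by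
  have hF := neg_log_survival_convex Φ hΦ hint
  refine ⟨convex_univ, ?_⟩
  intro x _ y _ a b ha hb hab
  have hsum : τ - ∑ k, c k * (a • x + b • y) k
      = a • (τ - ∑ k, c k * x k) + b • (τ - ∑ k, c k * y k) := by
    simp only [Pi.add_apply, Pi.smul_apply, smul_eq_mul]
    have h1 : ∑ k, c k * (a * x k + b * y k)
        = a * ∑ k, c k * x k + b * ∑ k, c k * y k := by
      rw [Finset.mul_sum, Finset.mul_sum, ← Finset.sum_add_distrib]
      exact Finset.sum_congr rfl fun k _ => by ring
    rw [h1]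
    have h2 : a * τ + b * τ = τ := by rw [← add_mul, hab, one_mul]
    linarith [h2]
  simp only []
  rw [hsum]
  exact hF.2 (Set.mem_univ _) (Set.mem_univ _) ha hb hab
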